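/- Let φ : ℝ → ℂ be continuous with compact support satisfying the interpolation condition φ(k) = δ[k] for k ∈ ℤ, and suppose ω ↦ Σ_{k∈ℤ} |φ̂(ω − 2kπ)|² is continuous. Then inf_{ω∈ℝ} Σ_{k∈ℤ} |φ̂(ω − 2kπ)|² > 0. -/

import Mathlib

open scoped BigOperators Real FourierTransform ENNReal
open Complex MeasureTheory ContinuousMap AddCircle

lemma summable_shift_sq
    (φ : ℝ → ℂ) (hcont : Continuous φ) (hsupp : HasCompactSupport φ)
    (φhat : ℝ → ℂ)
    (hφhat : ∀ ω : ℝ, φhat ω = ∫ t : ℝ, φ t * Complex.exp (-Complex.I * ω * t))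
    (ω : ℝ) :
    Summable (fun k : ℤ => ‖φhat (ω - 2 * k * π)‖ ^ 2) := by
  obtain ⟨r, hr⟩ := hsupp.isBounded.subset_closedBall 0
  set R : ℝ := max r 0 with hRdef
  have hR0 : 0 ≤ R := le_max_right r 0
  have hRsub : tsupport φ ⊆ Set.Icc (-R) R := by
    intro x hx
    have h1 : |x| ≤ r := by
      have := hr hx
      rwa [Metric.mem_closedBall, Real.dist_eq, sub_zero] at this
    have h2 : |x| ≤ R := le_trans h1 (le_max_left r 0)
    exact abs_le.mp h2
  set N : ℕ := ⌈2 * R + 2⌉₊ with hNdef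
  have hN : 2 * R + 2 ≤ (N : ℝ) := Nat.le_ceil _
  have hNpos : 0 < (N : ℝ) := by linarith
  haveI : Fact (0 < (N : ℝ)) := ⟨hNpos⟩
  set a : ℝ := -(R + 1) with hadef
  set g : ℝ → ℂ := fun t => φ t * Complex.exp (-Complex.I * ω * t) with hgdef
  have hg : Continuous g :=
    hcont.mul (Complex.continuous_exp.comp (continuous_const.mul Complex.continuous_ofReal))
  have hgsupp : ∀ x : ℝ, x ∉ Set.Icc (-R) R → g x = 0 := by
    intro x hx
    have : φ x = 0 := image_eq_zero_of_notMem_tsupport (fun h => hx (hRsub h))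
    simp [hgdef, this]
  have hga : g a = 0 := by
    apply hgsupp
    simp only [Set.mem_Icc, not_and_or]
    left; push_neg; simp only [hadef]; linarith
  have hgb : g (a + N) = 0 := by
    apply hgsupp
    simp only [Set.mem_Icc, not_and_or]
    right; push_neg; simp only [hadef]; linarith
  have hFc_cont : Continuous (AddCircle.liftIco (N : ℝ) a g) :=
    AddCircle.liftIco_continuous (by rw [hga, hgb]) hg.continuousOn
  set Fc : C(AddCircle (N : ℝ), ℂ) := ⟨AddCircle.liftIco (N : ℝ) a g, hFc_cont⟩ with hFcdef
  set X : Lp ℂ 2 (@haarAddCircle (N : ℝ) _) := ContinuousMap.toLp (E := ℂ) 2 haarAddCircle ℂ Fc with hXdef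
  have h1 : Summable fun i : ℤ => ‖fourierBasis.repr X i‖ ^ (2 : ℝ≥0∞).toReal :=
    (lp.memℓp (fourierBasis.repr X)).summable (by norm_num)
  have h2 : Summable fun i : ℤ => ‖fourierCoeff (⇑Fc) i‖ ^ 2 := by
    have h3 : (fun i : ℤ => ‖fourierCoeff (⇑Fc) i‖ ^ 2)
        = fun i : ℤ => ‖fourierBasis.repr X i‖ ^ (2 : ℝ≥0∞).toReal := by
      funext i
      rw [fourierBasis_repr, hXdef, fourierCoeff_toLp,
        show ((2 : ℝ≥0∞).toReal) = ((2 : ℕ) : ℝ) by norm_num, Real.rpow_natCast]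
    rw [h3]; exact h1
  have hinj : Function.Injective (fun k : ℤ => -(k * (N : ℤ))) := by
    have hN0 : (N : ℤ) ≠ 0 := by positivity
    intro x y h
    simp only [neg_inj] at h
    exact mul_right_cancel₀ hN0 h
  have hIccsub : Set.Icc (-R) R ⊆ Set.Ioc a (a + (N : ℝ)) := by
    intro x hx
    obtain ⟨hx1, hx2⟩ := hx
    constructor
    · simp only [hadef]; linarith
    · simp only [hadef]; linarith
  have hcoeff : ∀ k : ℤ, φhat (ω - 2 * k * π) = (N : ℝ) • fourierCoeff (⇑Fc) (-(k * (N : ℤ))) := by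
    intro k
    have e1 : fourierCoeff (⇑Fc) (-(k * (N : ℤ)))
        = (1 / ((N : ℝ))) • ∫ x in a..(a + (N : ℝ)),
            Complex.exp (2 * π * Complex.I * ((k * (N : ℤ) : ℤ) : ℂ) * x / ((N : ℝ) : ℂ)) * g x := by
      show fourierCoeff (AddCircle.liftIco (N : ℝ) a g) _ = _
      rw [fourierCoeff_liftIco_eq, fourierCoeffOn_eq_integral]
      simp only [neg_neg, add_sub_cancel_left, fourier_coe_apply, smul_eq_mul]
    have hexp : ∀ x : ℝ,
        Complex.exp (2 * π * Complex.I * ((k * (N : ℤ) : ℤ) : ℂ) * x / ((N : ℝ) : ℂ)) * g x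
          = φ x * Complex.exp (-Complex.I * ((ω - 2 * k * π : ℝ) : ℂ) * x) := by
      intro x
      have hN0 : ((N : ℝ) : ℂ) ≠ 0 := by exact_mod_cast hNpos.ne'
      have hNne : N ≠ 0 := by exact_mod_cast hNpos.ne'
      have hN0' : ((N : ℕ) : ℂ) ≠ 0 := Nat.cast_ne_zero.mpr hNne
      simp only [hgdef]
      rw [mul_comm, mul_assoc, ← Complex.exp_add]
      congr 2
      field_simp
      push_cast
      ring
    have e2 : (∫ x in a..(a + (N : ℝ)),
        Complex.exp (2 * π * Complex.I * ((k * (N : ℤ) : ℤ) : ℂ) * x / ((N : ℝ) : ℂ)) * g x)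
        = φhat (ω - 2 * k * π) := by
      rw [intervalIntegral.integral_of_le (by linarith : a ≤ a + (N : ℝ))]
      rw [MeasureTheory.setIntegral_eq_integral_of_forall_compl_eq_zero]
      · rw [hφhat]
        exact integral_congr_ae (Filter.Eventually.of_forall fun x => hexp x)
      · intro x hx
        have : g x = 0 := hgsupp x (fun h => hx (hIccsub h))
        simp [this]
    rw [← e2, e1, smul_smul]
    rw [mul_one_div, div_self hNpos.ne', one_smul]
  have hsummand : ∀ k : ℤ, ‖φhat (ω - 2 * k * π)‖ ^ 2
      = (N : ℝ) ^ 2 * ‖fourierCoeff (⇑Fc) (-(k * (N : ℤ)))‖ ^ 2 := by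
    intro k
    rw [hcoeff k, norm_smul, Real.norm_of_nonneg hNpos.le, mul_pow]
  exact (Summable.mul_left ((N : ℝ) ^ 2) (h2.comp_injective hinj)).congr
    (fun k => (hsummand k).symm)

theorem lower_riesz_bound
    (φ : ℝ → ℂ) (hcont : Continuous φ) (hsupp : HasCompactSupport φ)
    (hinterp : ∀ k : ℤ, φ k = if k = 0 then 1 else 0)
    (φhat : ℝ → ℂ)
    (hφhat : ∀ ω : ℝ, φhat ω = ∫ t : ℝ, φ t * Complex.exp (-Complex.I * ω * t))
    (hScont : Continuous (fun ω : ℝ => ∑' k : ℤ, ‖φhat (ω - 2 * k * π)‖ ^ 2)) :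
    0 < ⨅ ω : ℝ, ∑' k : ℤ, ‖φhat (ω - 2 * k * π)‖ ^ 2 := by
  set S : ℝ → ℝ := fun ω : ℝ => ∑' k : ℤ, ‖φhat (ω - 2 * k * π)‖ ^ 2 with hSdef
  -- support bound
  obtain ⟨r, hr⟩ := hsupp.isBounded.subset_closedBall 0
  set R : ℝ := max r 0 with hRdef
  have hR0 : 0 ≤ R := le_max_right r 0
  have hRsub : tsupport φ ⊆ Set.Icc (-R) R := by
    intro x hx
    have h1 : |x| ≤ r := by
      have := hr hx
      rwa [Metric.mem_closedBall, Real.dist_eq, sub_zero] at this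
    exact abs_le.mp (le_trans h1 (le_max_left r 0))
  -- Poisson summation contradiction
  have key : ∀ ω₀ : ℝ, (∀ k : ℤ, φhat (ω₀ - 2 * k * π) = 0) → False := by
    intro ω₀ h0
    set gC : C(ℝ, ℂ) := ⟨fun t => φ t * Complex.exp (-Complex.I * ω₀ * t),
      hcont.mul (Complex.continuous_exp.comp (continuous_const.mul Complex.continuous_ofReal))⟩
      with hgCdef
    have h_norm : ∀ K : TopologicalSpace.Compacts ℝ,
        Summable fun n : ℤ => ‖(gC.comp (ContinuousMap.addRight (n : ℝ))).restrict K‖ := by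
      intro K
      obtain ⟨B, hB⟩ := K.isCompact.isBounded.subset_closedBall 0
      apply summable_of_ne_finset_zero (s := Finset.Icc (-(⌈B + R⌉)) ⌈B + R⌉)
      intro n hn
      rw [norm_eq_zero]
      ext x
      simp only [ContinuousMap.restrict_apply, ContinuousMap.comp_apply,
        ContinuousMap.coe_addRight, ContinuousMap.coe_mk, ContinuousMap.zero_apply, hgCdef]
      have hφ0 : φ ((x : ℝ) + (n : ℝ)) = 0 := by
        apply image_eq_zero_of_notMem_tsupport
        intro hmem
        have h1 := hRsub hmem
        have hxB : |(x : ℝ)| ≤ B := by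
          have := hB x.2
          rwa [Metric.mem_closedBall, Real.dist_eq, sub_zero] at this
        obtain ⟨ha1, ha2⟩ := h1
        have hx1 : -B ≤ (x : ℝ) := (abs_le.mp hxB).1
        have hx2 : (x : ℝ) ≤ B := (abs_le.mp hxB).2
        apply hn
        rw [Finset.mem_Icc]
        constructor
        · have : (-(⌈B + R⌉) : ℝ) ≤ (n : ℝ) := by
            push_cast
            have := Int.le_ceil (B + R)
            linarith
          exact_mod_cast this
        · have : (n : ℝ) ≤ (⌈B + R⌉ : ℝ) := by
            have := Int.le_ceil (B + R)
            linarith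
          exact_mod_cast this
      rw [hφ0, zero_mul]
    have hFz : ∀ n : ℤ, 𝓕 ⇑gC (n : ℝ) = 0 := by
      intro n
      have heq : 𝓕 ⇑gC (n : ℝ) = φhat (ω₀ - 2 * ((-n : ℤ) : ℝ) * π) := by
        rw [hφhat, Real.fourier_real_eq_integral_exp_smul]
        apply integral_congr_ae
        apply Filter.Eventually.of_forall
        intro v
        simp only [hgCdef, ContinuousMap.coe_mk, smul_eq_mul]
        rw [mul_comm, mul_assoc, ← Complex.exp_add]
        congr 1
        push_cast
        ring
      rw [heq, h0]
    have h_sum : Summable fun n : ℤ => 𝓕 ⇑gC (n : ℝ) :=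
      Summable.congr summable_zero (fun n => (hFz n).symm)
    have hP := Real.tsum_eq_tsum_fourier h_norm h_sum 0
    have hL : (∑' n : ℤ, gC ((0 : ℝ) + (n : ℝ))) = 1 := by
      have : ∀ n : ℤ, gC ((0 : ℝ) + (n : ℝ)) = if n = 0 then 1 else 0 := by
        intro n
        simp only [hgCdef, ContinuousMap.coe_mk, zero_add]
        rw [show ((n : ℝ) : ℂ) = ((n : ℤ) : ℂ) by push_cast; ring] at *
        rw [hinterp n]
        by_cases hn : n = 0
        · subst hn; simp
        · simp [hn]
      rw [tsum_congr this]
      exact tsum_ite_eq 0 1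
    have hR' : (∑' n : ℤ, 𝓕 ⇑gC (n : ℝ) * fourier n ((0 : ℝ) : UnitAddCircle)) = 0 := by
      have : ∀ n : ℤ, 𝓕 ⇑gC (n : ℝ) * fourier n ((0 : ℝ) : UnitAddCircle) = 0 := by
        intro n; rw [hFz n, zero_mul]
      rw [tsum_congr this, tsum_zero]
    rw [hL, hR'] at hP
    exact one_ne_zero hP
  -- periodicity
  have hper : Function.Periodic S (2 * π) := by
    intro ω
    have hterm : ∀ k : ℤ, ‖φhat (ω + 2 * π - 2 * k * π)‖ ^ 2
        = (fun k : ℤ => ‖φhat (ω - 2 * k * π)‖ ^ 2) ((Equiv.subRight (1 : ℤ)) k) := by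
      intro k
      simp only [Equiv.subRight_apply]
      congr 2
      push_cast
      ring
    show (∑' k : ℤ, ‖φhat (ω + 2 * π - 2 * k * π)‖ ^ 2)
        = ∑' k : ℤ, ‖φhat (ω - 2 * k * π)‖ ^ 2
    exact (tsum_congr hterm).trans ((Equiv.subRight (1 : ℤ)).tsum_eq (fun k : ℤ => ‖φhat (ω - 2 * k * π)‖ ^ 2))
  -- min on a period
  obtain ⟨ω₀, hmem, hmin⟩ := isCompact_Icc.exists_isMinOn
    (Set.nonempty_Icc.mpr (by positivity : (0 : ℝ) ≤ 2 * π)) hScont.continuousOn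
  have hglobal : ∀ ω : ℝ, S ω₀ ≤ S ω := by
    intro ω
    obtain ⟨y, hy, hxy⟩ := hper.exists_mem_Ico₀ (by positivity) ω
    rw [hxy]
    exact isMinOn_iff.mp hmin y (Set.Ico_subset_Icc_self hy)
  refine lt_of_lt_of_le ?_ (le_ciInf hglobal)
  have hnn : 0 ≤ S ω₀ := tsum_nonneg (fun k => sq_nonneg _)
  rcases eq_or_lt_of_le hnn with he | h
  · exfalso
    apply key ω₀
    intro k
    have hsum := summable_shift_sq φ hcont hsupp φhat hφhat ω₀
    have h1 := Summable.le_tsum hsum k (fun j _ => sq_nonneg _)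
    have h1' : ‖φhat (ω₀ - 2 * k * π)‖ ^ 2 ≤ 0 := by rw [he]; exact h1
    have h2 : ‖φhat (ω₀ - 2 * k * π)‖ ^ 2 = 0 := le_antisymm h1' (sq_nonneg _)
    exact norm_eq_zero.mp (pow_eq_zero_iff two_ne_zero |>.mp h2)
  · exact h
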